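/- Let H be a complex Hilbert space, Π : H → H an orthogonal projection, and B : H → H a bounded linear operator with B = BΠ and ΠB = 0 (corresponding to B = TΠ with ΠTΠ = 0). For F ∈ H let G be the unique solution of G + B*B G = B*F, i.e., G = (1 + B*B)^{−1}B*F. Then 2‖G‖² + ‖BG‖² ≤ ‖(1−Π)F‖². In particular, the operator A := (1+B*B)^{−1}B* satisfies ‖AF‖ ≤ (1/2)‖(1−Π)F‖ and ‖BAF‖ ≤ ‖(1−Π)F‖ for all F ∈ H. -/

import Mathlib

/-- The key auxiliary bound of the abstract hypocoercivity method: let H be a complex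
Hilbert space, Π an orthogonal projection, and B bounded with B = BΠ and ΠB = 0
(corresponding to B = TΠ with ΠTΠ = 0). If G = (1+B*B)⁻¹B*F, i.e. G + B*(BG) = B*F,
then 2‖G‖² + ‖BG‖² ≤ ‖(1−Π)F‖²; in particular ‖G‖ ≤ (1/2)‖(1−Π)F‖ and
‖BG‖ ≤ ‖(1−Π)F‖, i.e. A = (1+B*B)⁻¹B* satisfies ‖AF‖ ≤ (1/2)‖(1−Π)F‖ and
‖BAF‖ ≤ ‖(1−Π)F‖. -/
theorem stmt_14
    {H : Type*} [NormedAddCommGroup H] [InnerProductSpace ℂ H] [CompleteSpace H]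
    (Pr B : H →L[ℂ] H)
    (hPr_idem : Pr.comp Pr = Pr)
    (hPr_sa : ContinuousLinearMap.adjoint Pr = Pr)
    (hBPr : B.comp Pr = B)
    (hPrB : Pr.comp B = 0)
    (F G : H)
    (hG : G + ContinuousLinearMap.adjoint B (B G) = ContinuousLinearMap.adjoint B F) :
    2 * ‖G‖ ^ 2 + ‖B G‖ ^ 2 ≤ ‖F - Pr F‖ ^ 2 ∧
    ‖G‖ ≤ (1 / 2) * ‖F - Pr F‖ ∧
    ‖B G‖ ≤ ‖F - Pr F‖ := by
  have hPrBG : Pr (B G) = 0 := by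
    have := congrFun (congrArg DFunLike.coe hPrB) G
    simpa using this
  have hBGPrF : (inner ℂ (B G) (Pr F) : ℂ) = 0 := by
    rw [← hPr_sa, ContinuousLinearMap.adjoint_inner_right, hPrBG, inner_zero_left]
  have e1 : (inner ℂ G (G + ContinuousLinearMap.adjoint B (B G)) : ℂ)
      = ((‖G‖ ^ 2 + ‖B G‖ ^ 2 : ℝ) : ℂ) := by
    rw [inner_add_right, ContinuousLinearMap.adjoint_inner_right,
      inner_self_eq_norm_sq_to_K, inner_self_eq_norm_sq_to_K]
    norm_cast
  have e2 : (inner ℂ G (ContinuousLinearMap.adjoint B F) : ℂ) = inner ℂ (B G) (F - Pr F) := by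
    rw [ContinuousLinearMap.adjoint_inner_right, inner_sub_right, hBGPrF, sub_zero]
  have e3 : ((‖G‖ ^ 2 + ‖B G‖ ^ 2 : ℝ) : ℂ) = inner ℂ (B G) (F - Pr F) := by
    rw [← e1, hG, e2]
  have hkey : ‖G‖ ^ 2 + ‖B G‖ ^ 2 ≤ ‖B G‖ * ‖F - Pr F‖ := by
    have := norm_inner_le_norm (𝕜 := ℂ) (B G) (F - Pr F)
    calc ‖G‖ ^ 2 + ‖B G‖ ^ 2 = Complex.re ((‖G‖ ^ 2 + ‖B G‖ ^ 2 : ℝ) : ℂ) := (Complex.ofReal_re _).symm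
      _ = Complex.re (inner ℂ (B G) (F - Pr F) : ℂ) := by rw [e3]
      _ ≤ ‖(inner ℂ (B G) (F - Pr F) : ℂ)‖ := Complex.re_le_norm _
      _ ≤ ‖B G‖ * ‖F - Pr F‖ := this
  have hG0 : (0:ℝ) ≤ ‖G‖ := norm_nonneg _
  have hBG0 : (0:ℝ) ≤ ‖B G‖ := norm_nonneg _
  have hF0 : (0:ℝ) ≤ ‖F - Pr F‖ := norm_nonneg _
  refine ⟨by nlinarith [sq_nonneg (‖B G‖ - ‖F - Pr F‖)], ?_, by nlinarith⟩
  nlinarith [sq_nonneg (‖B G‖ - ‖F - Pr F‖ / 2), sq_nonneg (‖G‖ - ‖F - Pr F‖ / 2)]
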